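/- Let ζ_{ij}^β ∈ ℝ (i,j ∈ {1,…,r}, β ∈ {1,…,n}) be symmetric in i,j, and set T^β = ∑_{i=1}^r ζ_{ii}^β and ‖ζ‖² = ∑_{β} ∑_{i,j} (ζ_{ij}^β)². Then ‖ζ‖² = (1/2) ∑_β (T^β)² + (1/2) ∑_β (ζ_{11}^β − ζ_{22}^β − ⋯ − ζ_{rr}^β)² + 2 ∑_β ∑_{i=2}^r (ζ_{1i}^β)² − 2 ∑_β ∑_{2≤i<j≤r} ( ζ_{ii}^β ζ_{jj}^β − (ζ_{ij}^β)² ). -/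

import Mathlib

open Finset

private lemma L1 {r : ℕ} (f : Fin r → Fin r → ℝ) (hf : ∀ i j, f i j = f j i) :
    ∑ i : Fin r, ∑ j : Fin r, f i j
      = (∑ i : Fin r, f i i)
        + 2 * ∑ i : Fin r, ∑ j : Fin r, if i < j then f i j else 0 := by
  have key : ∀ i j : Fin r, f i j =
      (if i < j then f i j else 0) + (if i = j then f i j else 0)
        + (if j < i then f i j else 0) := by
    intro i j
    rcases lt_trichotomy i j with h | h | h
    · simp [h, h.ne, h.asymm]
    · simp [h, lt_irrefl]
    · simp [h, h.ne', h.asymm]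
  calc ∑ i : Fin r, ∑ j : Fin r, f i j
      = ∑ i : Fin r, ∑ j : Fin r,
          ((if i < j then f i j else 0) + (if i = j then f i j else 0)
            + (if j < i then f i j else 0)) :=
        sum_congr rfl fun i _ => sum_congr rfl fun j _ => key i j
    _ = (∑ i : Fin r, ∑ j : Fin r, if i < j then f i j else 0)
        + (∑ i : Fin r, ∑ j : Fin r, if i = j then f i j else 0)
        + (∑ i : Fin r, ∑ j : Fin r, if j < i then f i j else 0) := by
        simp [Finset.sum_add_distrib]
    _ = _ := by
        have h1 : (∑ i : Fin r, ∑ j : Fin r, if i = j then f i j else 0)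
            = ∑ i : Fin r, f i i := by simp
        have h2 : (∑ i : Fin r, ∑ j : Fin r, if j < i then f i j else 0)
            = ∑ i : Fin r, ∑ j : Fin r, if i < j then f i j else 0 := by
          rw [Finset.sum_comm]
          exact sum_congr rfl fun i _ => sum_congr rfl fun j _ => by rw [hf]
        rw [h1, h2]; ring

private lemma L2 {r : ℕ} (hr : 0 < r) (h : Fin r → ℝ) :
    ∑ i : Fin r, h i
      = h ⟨0, hr⟩ + ∑ i : Fin r, if (⟨0, hr⟩ : Fin r) < i then h i else 0 := by
  have key : ∀ i : Fin r, h i =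
      (if i = ⟨0, hr⟩ then h i else 0)
        + (if (⟨0, hr⟩ : Fin r) < i then h i else 0) := by
    intro i
    rcases eq_or_ne i ⟨0, hr⟩ with h' | h'
    · simp [h', lt_irrefl]
    · have hlt : (⟨0, hr⟩ : Fin r) < i := by
        rw [Fin.lt_def]
        exact Nat.pos_of_ne_zero fun h0 => h' (Fin.ext h0)
      simp [h', hlt]
  calc ∑ i : Fin r, h i
      = ∑ i : Fin r, ((if i = ⟨0, hr⟩ then h i else 0)
          + (if (⟨0, hr⟩ : Fin r) < i then h i else 0)) :=
        sum_congr rfl fun i _ => key i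
    _ = _ := by rw [Finset.sum_add_distrib]; simp

private lemma L3 {r : ℕ} (hr : 0 < r) (f : Fin r → Fin r → ℝ) :
    (∑ i : Fin r, ∑ j : Fin r, if i < j then f i j else 0)
      = (∑ j : Fin r, if (⟨0, hr⟩ : Fin r) < j then f ⟨0, hr⟩ j else 0)
        + ∑ i : Fin r, ∑ j : Fin r,
            if (⟨0, hr⟩ : Fin r) < i ∧ i < j then f i j else 0 := by
  rw [L2 hr (fun i => ∑ j : Fin r, if i < j then f i j else 0)]
  congr 1
  refine sum_congr rfl fun i _ => ?_
  split_ifs with h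
  · exact sum_congr rfl fun j _ => by simp [h]
  · simp [h]

private lemma L4 {r : ℕ} (g : Fin r → ℝ) :
    (∑ i : Fin r, g i) ^ 2
      = (∑ i : Fin r, (g i) ^ 2)
        + 2 * ∑ i : Fin r, ∑ j : Fin r, if i < j then g i * g j else 0 := by
  have := L1 (fun i j => g i * g j) (fun i j => mul_comm _ _)
  rw [sq, Finset.sum_mul_sum]
  simpa [sq] using this

private lemma perBeta {r : ℕ} (hr : 0 < r) (f : Fin r → Fin r → ℝ)
    (hf : ∀ i j, f i j = f j i) :
    ∑ i : Fin r, ∑ j : Fin r, (f i j) ^ 2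
      = (1 / 2) * (∑ i : Fin r, f i i) ^ 2
        + (1 / 2) * (f ⟨0, hr⟩ ⟨0, hr⟩
            - ∑ i : Fin r, if (⟨0, hr⟩ : Fin r) < i then f i i else 0) ^ 2
        + 2 * (∑ i : Fin r, if (⟨0, hr⟩ : Fin r) < i then (f ⟨0, hr⟩ i) ^ 2 else 0)
        - 2 * (∑ i : Fin r, ∑ j : Fin r,
            if (⟨0, hr⟩ : Fin r) < i ∧ i < j then f i i * f j j - (f i j) ^ 2 else 0) := by
  set z : Fin r := ⟨0, hr⟩ with hz
  set S : ℝ := ∑ i : Fin r, if z < i then f i i else 0 with hS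
  set D : ℝ := ∑ i : Fin r, if z < i then (f i i) ^ 2 else 0 with hD
  set Qz : ℝ := ∑ i : Fin r, if z < i then (f z i) ^ 2 else 0 with hQz
  set Q : ℝ := ∑ i : Fin r, ∑ j : Fin r, if z < i ∧ i < j then (f i j) ^ 2 else 0 with hQ
  set P : ℝ := ∑ i : Fin r, ∑ j : Fin r, if z < i ∧ i < j then f i i * f j j else 0 with hP
  -- LHS
  have hLHS : ∑ i : Fin r, ∑ j : Fin r, (f i j) ^ 2
      = (f z z ^ 2 + D) + 2 * (Qz + Q) := by
    rw [L1 (fun i j => (f i j) ^ 2) (fun i j => by rw [hf i j]),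
      L3 hr (fun i j => (f i j) ^ 2), L2 hr (fun i => (f i i) ^ 2)]
  -- trace
  have hT : (∑ i : Fin r, f i i) = f z z + S := L2 hr (fun i => f i i)
  -- S squared
  have hS2 : S ^ 2 = D + 2 * P := by
    rw [hS, L4 (fun i => if z < i then f i i else 0)]
    congr 1
    · refine sum_congr rfl fun i _ => ?_
      split_ifs with h <;> simp
    · congr 1
      refine sum_congr rfl fun i _ => sum_congr rfl fun j _ => ?_
      by_cases hij : i < j
      · by_cases hzi : z < i
        · have hzj : z < j := lt_trans hzi hij
          simp [hij, hzi, hzj]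
        · simp [hij, hzi]
      · simp [hij, fun h : z < i ∧ i < j => hij h.2]
  -- minor sum splits
  have hM : (∑ i : Fin r, ∑ j : Fin r,
      if z < i ∧ i < j then f i i * f j j - (f i j) ^ 2 else 0) = P - Q := by
    rw [hP, hQ, ← Finset.sum_sub_distrib]
    refine sum_congr rfl fun i _ => ?_
    rw [← Finset.sum_sub_distrib]
    refine sum_congr rfl fun j _ => ?_
    split_ifs <;> simp
  rw [hLHS, hT, hM]
  linear_combination -hS2

theorem stmt4 (r n : ℕ) (hr : 0 < r) (ζ : Fin n → Fin r → Fin r → ℝ)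
    (hsym : ∀ β i j, ζ β i j = ζ β j i) :
    (∑ β : Fin n, ∑ i : Fin r, ∑ j : Fin r, (ζ β i j) ^ 2)
    = (1 / 2) * (∑ β : Fin n, (∑ i : Fin r, ζ β i i) ^ 2)
      + (1 / 2) * (∑ β : Fin n,
          (ζ β ⟨0, hr⟩ ⟨0, hr⟩
            - ∑ i : Fin r, if (⟨0, hr⟩ : Fin r) < i then ζ β i i else 0) ^ 2)
      + 2 * (∑ β : Fin n, ∑ i : Fin r,
          if (⟨0, hr⟩ : Fin r) < i then (ζ β ⟨0, hr⟩ i) ^ 2 else 0)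
      - 2 * (∑ β : Fin n, ∑ i : Fin r, ∑ j : Fin r,
          if (⟨0, hr⟩ : Fin r) < i ∧ i < j then
            ζ β i i * ζ β j j - (ζ β i j) ^ 2 else 0) := by
  rw [Finset.mul_sum, Finset.mul_sum, Finset.mul_sum, Finset.mul_sum,
    ← Finset.sum_add_distrib, ← Finset.sum_add_distrib, ← Finset.sum_sub_distrib]
  exact sum_congr rfl fun β _ => perBeta hr (ζ β) (hsym β)
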